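/- Let p and q be distinct primes with q ≡ 3 (mod 8), and let r be an integer with q dividing r² + p. Then the set of reduced norms of elements of the Gross lattice of R(q,r) in B = ℍ(−p, −q) is exactly the set of rationals of the form q·a² + ((r² + p)/q)·b² + p·c² + 2r·a·b, where a, b, c range over integers with b ≡ c (mod 2). -/

import Mathlib

open Quaternion

/-- The reduced trace of a quaternion: `tr v = v + star v` (as a scalar). -/
def trd {c₁ c₂ : ℚ} (v : ℍ[ℚ, c₁, c₂]) : ℚ := (v + star v).re

/-- The reduced norm of a quaternion: `nrd v = v * star v` (as a scalar). -/
def nrd {c₁ c₂ : ℚ} (v : ℍ[ℚ, c₁, c₂]) : ℚ := (v * star v).re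

/-- `α` in `B = ℍ(-p, -q)`, with `α² = -p`. -/
def qa (p q : ℕ) : ℍ[ℚ, -(p : ℚ), -(q : ℚ)] := ⟨0, 1, 0, 0⟩

/-- `β` in `B = ℍ(-p, -q)`, with `β² = -q`. -/
def qb (p q : ℕ) : ℍ[ℚ, -(p : ℚ), -(q : ℚ)] := ⟨0, 0, 1, 0⟩

/-- The ℤ-lattice `R(q,r)` spanned by `1, (1+β)/2, α(1+β)/2, (r+α)β/q`. -/
def Rqr (p q : ℕ) (r : ℤ) : Submodule ℤ ℍ[ℚ, -(p : ℚ), -(q : ℚ)] :=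
  Submodule.span ℤ
    ({1, ((2 : ℚ)⁻¹) • (1 + qb p q), ((2 : ℚ)⁻¹) • (qa p q * (1 + qb p q)),
      ((q : ℚ)⁻¹) • (((r : ℚ) • (1 : ℍ[ℚ, -(p : ℚ), -(q : ℚ)]) + qa p q) * qb p q)} :
      Set ℍ[ℚ, -(p : ℚ), -(q : ℚ)])

/-- The Gross lattice `{x ∈ ℤ + 2R : tr(x) = 0}` of a ℤ-lattice `R` in `ℍ(-p,-q)`. -/
def GrossLattice (p q : ℕ) (R : Submodule ℤ ℍ[ℚ, -(p : ℚ), -(q : ℚ)]) :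
    Set ℍ[ℚ, -(p : ℚ), -(q : ℚ)] :=
  {v | (∃ n : ℤ, ∃ u ∈ R, v = (n : ℍ[ℚ, -(p : ℚ), -(q : ℚ)]) + 2 • u) ∧ trd v = 0}

lemma gen2 (p q : ℕ) : ((2:ℚ)⁻¹) • (1 + qb p q) = (⟨1/2,0,1/2,0⟩ : ℍ[ℚ, -(p:ℚ), -(q:ℚ)]) := by
  ext <;> simp [qb]
lemma gen3 (p q : ℕ) : ((2:ℚ)⁻¹) • (qa p q * (1 + qb p q)) = (⟨0,1/2,0,1/2⟩ : ℍ[ℚ, -(p:ℚ), -(q:ℚ)]) := by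
  ext <;> simp [qa, qb,
    ]
lemma gen4 (p q : ℕ) (r : ℤ) :
    ((q:ℚ)⁻¹) • (((r : ℚ) • (1 : ℍ[ℚ, -(p : ℚ), -(q : ℚ)]) + qa p q) * qb p q)
      = (⟨0,0,(r:ℚ)/q,1/q⟩ : ℍ[ℚ, -(p:ℚ), -(q:ℚ)]) := by
  ext <;> simp [qa, qb,
    div_eq_mul_inv] <;> ring

lemma comb (p q : ℕ) (r n a b c d : ℤ) :
    ((n : ℤ) : ℍ[ℚ, -(p : ℚ), -(q : ℚ)]) + 2 • ((a • (1 : ℍ[ℚ, -(p:ℚ), -(q:ℚ)])) +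
      (b • (⟨1/2,0,1/2,0⟩ : ℍ[ℚ, -(p:ℚ), -(q:ℚ)]) +
        (c • (⟨0,1/2,0,1/2⟩ : ℍ[ℚ, -(p:ℚ), -(q:ℚ)]) + d • (⟨0,0,(r:ℚ)/q,1/q⟩ : ℍ[ℚ, -(p:ℚ), -(q:ℚ)]))))
    = (⟨(n:ℚ)+2*a+b, (c:ℚ), (b:ℚ)+2*d*r/q, (c:ℚ)+2*d/q⟩ : ℍ[ℚ, -(p:ℚ), -(q:ℚ)]) := by
  ext <;> simp [two_smul,
    zsmul_eq_mul] <;> ring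

lemma nrd_mk (p q : ℕ) (x y z : ℚ) :
    nrd (⟨0,x,y,z⟩ : ℍ[ℚ, -(p:ℚ), -(q:ℚ)]) = p*x^2 + q*y^2 + p*q*z^2 := by
  simp [nrd, QuaternionAlgebra.star_mk]
  ring

lemma trd_mk (p q : ℕ) (w x y z : ℚ) :
    trd (⟨w,x,y,z⟩ : ℍ[ℚ, -(p:ℚ), -(q:ℚ)]) = 2*w := by
  simp [trd, QuaternionAlgebra.star_mk]
  ring

lemma mem_gross_iff (p q : ℕ) (r : ℤ) (v : ℍ[ℚ, -(p : ℚ), -(q : ℚ)]) :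
    v ∈ GrossLattice p q (Rqr p q r) ↔ ∃ b c d : ℤ,
      v = ⟨0, (c:ℚ), (b:ℚ) + 2*(d:ℚ)*(r:ℚ)/(q:ℚ), (c:ℚ) + 2*(d:ℚ)/(q:ℚ)⟩ := by
  constructor
  · rintro ⟨⟨n, u, hu, rfl⟩, htr⟩
    rw [Rqr, Submodule.mem_span_insert] at hu
    obtain ⟨a, u1, hu1, rfl⟩ := hu
    rw [Submodule.mem_span_insert] at hu1
    obtain ⟨b, u2, hu2, rfl⟩ := hu1
    rw [Submodule.mem_span_insert] at hu2
    obtain ⟨c, u3, hu3, rfl⟩ := hu2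
    rw [Submodule.mem_span_singleton] at hu3
    obtain ⟨d, rfl⟩ := hu3
    rw [gen2, gen3, gen4, comb] at htr ⊢
    rw [trd_mk] at htr
    have h0 : (n:ℚ) + 2*a + b = 0 := by linarith
    refine ⟨b, c, d, ?_⟩
    ext
    · exact h0
    · rfl
    · rfl
    · rfl
  · rintro ⟨b, c, d, rfl⟩
    constructor
    · refine ⟨-b, (0:ℤ) • (1 : ℍ[ℚ, -(p:ℚ), -(q:ℚ)]) +
        (b • ((2:ℚ)⁻¹ • (1 + qb p q)) +
          (c • ((2:ℚ)⁻¹ • (qa p q * (1 + qb p q))) +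
            d • ((q:ℚ)⁻¹ • (((r : ℚ) • (1 : ℍ[ℚ, -(p : ℚ), -(q : ℚ)]) + qa p q) * qb p q)))), ?_, ?_⟩
      · refine Submodule.add_mem _ (Submodule.smul_mem _ _ (Submodule.subset_span (by simp)))
          (Submodule.add_mem _ (Submodule.smul_mem _ _ (Submodule.subset_span (by simp)))
            (Submodule.add_mem _ (Submodule.smul_mem _ _ (Submodule.subset_span (by simp)))
              (Submodule.smul_mem _ _ (Submodule.subset_span (by simp)))))
      · rw [gen2, gen3, gen4, comb]
        ext <;> push_cast <;> ring
    · rw [trd_mk]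
      ring

theorem gross_lattice_norms_Rqr (p q : ℕ) (hp : p.Prime) (hq : q.Prime) (hpq : p ≠ q)
    (hq8 : q % 8 = 3) (r : ℤ) (hdvd : (q : ℤ) ∣ r ^ 2 + (p : ℤ)) :
    {t : ℚ | ∃ v ∈ GrossLattice p q (Rqr p q r), nrd v = t} =
      {t : ℚ | ∃ a b c : ℤ, b % 2 = c % 2 ∧
        t = (q : ℚ) * (a : ℚ) ^ 2 + (((r : ℚ) ^ 2 + (p : ℚ)) / (q : ℚ)) * (b : ℚ) ^ 2 +
          (p : ℚ) * (c : ℚ) ^ 2 + 2 * (r : ℚ) * (a : ℚ) * (b : ℚ)} := by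
  have hq0 : (q : ℚ) ≠ 0 := Nat.cast_ne_zero.mpr hq.ne_zero
  have hq2 : q % 2 = 1 := by omega
  ext t
  simp only [Set.mem_setOf_eq]
  constructor
  · rintro ⟨v, hv, rfl⟩
    rw [mem_gross_iff] at hv
    obtain ⟨b, c, d, rfl⟩ := hv
    have hqc : ((q:ℤ)*c) % 2 = c % 2 := by
      have h1 : (q:ℤ) % 2 = 1 := by omega
      conv_lhs => rw [Int.mul_emod, h1, one_mul]
      omega
    refine ⟨b - r*c, (q:ℤ)*c + 2*d, c, by omega, ?_⟩
    rw [nrd_mk]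
    push_cast
    field_simp
    ring
  · rintro ⟨a, B, C, hpar, rfl⟩
    have hqc : ((q:ℤ)*C) % 2 = C % 2 := by
      have h1 : (q:ℤ) % 2 = 1 := by omega
      conv_lhs => rw [Int.mul_emod, h1, one_mul]
      omega
    have h2 : (2:ℤ) ∣ B - (q:ℤ)*C := by omega
    obtain ⟨k, hk⟩ := h2
    refine ⟨⟨0, (C:ℚ), ((a + r*C : ℤ):ℚ) + 2*(k:ℚ)*(r:ℚ)/(q:ℚ), (C:ℚ) + 2*(k:ℚ)/(q:ℚ)⟩,
      (mem_gross_iff p q r _).mpr ⟨a + r*C, C, k, rfl⟩, ?_⟩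
    rw [nrd_mk]
    have hB : (B:ℚ) = (q:ℚ)*(C:ℚ) + 2*(k:ℚ) := by
      have : B = q*C + 2*k := by omega
      exact_mod_cast congrArg (Int.cast : ℤ → ℚ) this
    rw [hB]
    push_cast
    field_simp
    ring
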